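/- Let N and γ be natural numbers, let loc : Fin N → ℕ assign a location (Hilbert value) to each object, and let kw : Fin N → Finset K assign a finite keyword set to each object over a keyword type K. Let G be a finite set of pairs (p, j) of natural numbers (a prefix cover of the query range) and let W_q be a finite set of keywords. Define the range R = ⋃_{(p,j) ∈ G} {x : ℕ | p·2^j ≤ x < (p+1)·2^j}, the prefix bitmap B_{(p,j)} = {i : Fin N | loc i / 2^j = p} for each (p, j) ∈ G, and the keyword bitmap B_w = {i : Fin N | w ∈ kw i} for each w ∈ W_q. Then (⋃_{(p,j) ∈ G} B_{(p,j)}) ∩ (⋂_{w ∈ W_q} B_w) = {i : Fin N | loc i ∈ R and W_q ⊆ kw i}; that is, taking the union of the matched prefix bitmaps and intersecting with all matched keyword bitmaps returns exactly the answer set Δ(Q) of the Boolean range query. -/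

import Mathlib

/-- Correctness of the BRASP search phase: the union of the matched prefix
bitmaps intersected with all matched keyword bitmaps is exactly the answer set
`Δ(Q)` of the Boolean range query `Q = (R, W_q)`. -/
theorem boolean_range_query_correct {K : Type*} (N γ : ℕ)
    (loc : Fin N → ℕ) (kw : Fin N → Finset K)
    (G : Finset (ℕ × ℕ)) (W_q : Finset K) :
    (⋃ pj ∈ (G : Set (ℕ × ℕ)), {i : Fin N | loc i / 2 ^ pj.2 = pj.1}) ∩
      (⋂ w ∈ (W_q : Set K), {i : Fin N | w ∈ kw i}) =
    {i : Fin N |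
      (loc i ∈ ⋃ pj ∈ (G : Set (ℕ × ℕ)),
        Set.Ico (pj.1 * 2 ^ pj.2) ((pj.1 + 1) * 2 ^ pj.2)) ∧
      W_q ⊆ kw i} := by
  ext i
  simp only [Set.mem_inter_iff, Set.mem_iUnion, Set.mem_iInter, Set.mem_setOf_eq,
    Set.mem_Ico, Finset.subset_iff]
  constructor
  · rintro ⟨⟨pj, hpj, hdiv⟩, hw⟩
    refine ⟨⟨pj, hpj, ?_, ?_⟩, fun {w} hw' => hw w hw'⟩
    · exact hdiv ▸ Nat.div_mul_le_self _ _
    · rw [← hdiv]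
      have := Nat.lt_div_mul_add (a := loc i) (b := 2 ^ pj.2) (Nat.pow_pos (by norm_num))
      calc loc i < loc i / 2 ^ pj.2 * 2 ^ pj.2 + 2 ^ pj.2 := this
        _ = (loc i / 2 ^ pj.2 + 1) * 2 ^ pj.2 := by ring
  · rintro ⟨⟨pj, hpj, h1, h2⟩, hw⟩
    refine ⟨⟨pj, hpj, ?_⟩, fun w hw' => hw hw'⟩
    exact Nat.div_eq_of_lt_le h1 h2
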